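/- (Lemma 4.13 ii), bound for p > 2.) Let p > 2, and let f ∈ k[X] with f(0) = 0, m := deg f, p ∤ m, m ≥ 2, and genus (m−1)(p−1)/2 > 1. Write m − 1 = ℓ·p^s with p ∤ ℓ and s = v_p(m−1) ≥ 1, and assume ℓ > 1. Then |S(f)| ≤ p^s; equivalently, |G_{∞,1}(f)| ≤ p^{s+1}. -/

import Mathlib

open Polynomial

lemma coeff_comp_X_add_C' {k : Type*} [Field k] (f : k[X]) (y : k) (n : ℕ) :
    (f.comp (X + C y)).coeff n =
      ∑ i ∈ Finset.range (f.natDegree + 1), f.coeff i * (y ^ (i - n) * (i.choose n : k)) := by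
  have h0 : ∀ n : ℕ, (fun (e : ℕ) (a : k) => C a * (X + C y) ^ e) n 0 = 0 := by simp
  rw [comp_eq_sum_left, Polynomial.sum_over_range f h0, finset_sum_coeff]
  exact Finset.sum_congr rfl fun i _ => by rw [coeff_C_mul, coeff_X_add_C_pow]

lemma lucas_aux (p : ℕ) (hp : p.Prime) (ℓ s : ℕ) (hs : 1 ≤ s) (hpl : ¬ p ∣ ℓ) :
    ¬ p ∣ Nat.choose (ℓ * p ^ s + 1) (p ^ s) := by
  haveI : Fact p.Prime := ⟨hp⟩
  have hq1 : 1 < p ^ s := Nat.one_lt_pow (by omega) hp.one_lt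
  have h := Choose.choose_modEq_choose_mul_prod_range_choose
    (n := ℓ * p ^ s + 1) (k := p ^ s) (p := p) s
  have hdiv : (ℓ * p ^ s + 1) / p ^ s = ℓ := by
    rw [mul_comm, Nat.mul_add_div (by omega), Nat.div_eq_of_lt hq1, add_zero]
  have hprod : ∀ i ∈ Finset.range s,
      Nat.choose ((ℓ * p ^ s + 1) / p ^ i % p) (p ^ s / p ^ i % p) = 1 := by
    intro i hi
    have : p ^ s / p ^ i % p = 0 := by
      rw [Nat.pow_div (by simp at hi; omega) hp.pos]
      have h2 : s - i = (s - i - 1) + 1 := by simp at hi; omega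
      rw [h2, pow_succ]
      exact Nat.mul_mod_left _ _
    rw [this, Nat.choose_zero_right]
  rw [Finset.prod_congr rfl hprod, Finset.prod_const_one, hdiv,
    Nat.div_self (by omega : 0 < p ^ s), Nat.choose_one_right, Nat.cast_one, mul_one] at h
  intro hdvd
  have h0 : ((Nat.choose (ℓ * p ^ s + 1) (p ^ s) : ℤ) : ZMod p) = ((ℓ : ℤ) : ZMod p) :=
    (ZMod.intCast_eq_intCast_iff _ _ _).mpr h
  push_cast at h0
  rw [(ZMod.natCast_eq_zero_iff _ _).mpr hdvd] at h0
  exact hpl ((ZMod.natCast_eq_zero_iff _ _).mp h0.symm)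

/-- `S(f)`: the set of `y ∈ k` such that `f(X+y) - f(X) - f(y) = P(X) - P(X)^p`
for some polynomial `P` with `P(0) = 0`. -/
def Sf (p : ℕ) {k : Type*} [Field k] (f : k[X]) : Set k :=
  {y | ∃ P : k[X], P.coeff 0 = 0 ∧
    f.comp (X + C y) - f - C (f.eval y) = P - P ^ p}

/-- Lemma 4.13 ii) (bound for `p > 2`): if `m = deg f` is prime to `p`, the genus
`(m-1)(p-1)/2 > 1`, and `m - 1 = ℓ·p^s` with `p ∤ ℓ`, `ℓ > 1`, `s ≥ 1`, then
`|S(f)| ≤ p^s`, i.e. `|G_{∞,1}(f)| ≤ p^{s+1}`. -/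
theorem card_Sf_le_odd_char (p : ℕ) (hp : p.Prime) (hp2 : 2 < p)
    (k : Type*) [Field k] [IsAlgClosed k] [CharP k p]
    (f : k[X]) (hf0 : f.coeff 0 = 0) (m : ℕ) (hm : f.natDegree = m)
    (hpm : ¬ p ∣ m) (hm2 : 2 ≤ m) (hg : 2 < (m - 1) * (p - 1))
    (ℓ s : ℕ) (hs : 1 ≤ s) (hpl : ¬ p ∣ ℓ) (hℓ : 1 < ℓ)
    (hml : m - 1 = ℓ * p ^ s) :
    (Sf p f).Finite ∧ (Sf p f).ncard ≤ p ^ s := by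
  haveI : Fact p.Prime := ⟨hp⟩
  classical
  haveI : ExpChar k p := ExpChar.prime hp
  set q : ℕ := p ^ s with hq
  have hq3 : 3 ≤ q := le_trans hp2 (Nat.le_self_pow (by omega) p)
  have hm1 : m = ℓ * q + 1 := by omega
  set j : ℕ := m - q with hjdef
  have hbq : (ℓ - 1) * q + q = ℓ * q := by
    rw [Nat.sub_mul, one_mul]
    exact Nat.sub_add_cancel (Nat.le_mul_of_pos_left q (by omega))
  have hj : j = (ℓ - 1) * q + 1 := by omega
  have hmjq : m = j + q := by omega
  have hj1 : 1 ≤ j := by omega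
  have hpj : ¬ p ∣ j := by
    intro hd
    have hpq : p ∣ (ℓ - 1) * q := Dvd.dvd.mul_left (dvd_pow_self p (by omega)) _
    have h1 : p ∣ 1 := by
      have := Nat.dvd_sub hd hpq
      rwa [hj, Nat.add_sub_cancel_left] at this
    have := Nat.le_of_dvd one_pos h1
    omega
  have hlj : ℓ * q < p * j := by
    have h1 : ℓ ≤ (ℓ - 1) * p := by nlinarith [Nat.sub_add_cancel (le_of_lt hℓ)]
    calc ℓ * q ≤ ((ℓ - 1) * p) * q := Nat.mul_le_mul_right q h1
      _ = p * ((ℓ - 1) * q) := by ring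
      _ < p * ((ℓ - 1) * q + 1) := mul_lt_mul_of_pos_left (Nat.lt_succ_self _) hp.pos
      _ = p * j := by rw [hj]
  have hfne : f ≠ 0 := fun h => by simp [h] at hm; omega
  have hfm : f.coeff m ≠ 0 := by
    rw [← hm]
    exact Polynomial.leadingCoeff_ne_zero.mpr hfne
  -- the auxiliary polynomial g
  set g : k[X] := (∑ i ∈ Finset.range (m + 1),
      C (f.coeff i * (i.choose j : k)) * X ^ (i - j)) - C (f.coeff j) with hgdef
  -- every element of Sf is a root of g
  have hroot : ∀ y ∈ Sf p f, g.IsRoot y := by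
    rintro y ⟨P, hP0, hPe⟩
    -- degree bound on the difference polynomial
    have hDdeg : (f.comp (X + C y) - f - C (f.eval y)).natDegree ≤ m - 1 := by
      rw [natDegree_le_iff_coeff_eq_zero]
      intro N hN
      have hN' : m ≤ N := by omega
      rw [coeff_sub, coeff_sub, coeff_comp_X_add_C', hm, coeff_C, if_neg (by omega)]
      rcases eq_or_lt_of_le hN' with h | h
      · rw [Finset.sum_eq_single_of_mem m (Finset.self_mem_range_succ m)
          (fun i hi hne => by
            have : i < m := by simp at hi; omega
            rw [Nat.choose_eq_zero_of_lt (by omega), Nat.cast_zero, mul_zero, mul_zero]),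
          ← h, Nat.choose_self, Nat.sub_self, pow_zero, Nat.cast_one, mul_one, mul_one]
        ring
      · rw [Finset.sum_eq_zero (fun i hi => by
            have : i < m + 1 := by simpa using hi
            rw [Nat.choose_eq_zero_of_lt (by omega), Nat.cast_zero, mul_zero, mul_zero]),
          coeff_eq_zero_of_natDegree_lt (by omega)]
        ring
    -- degree bound on P
    have hPdeg : P.natDegree < j := by
      by_cases hPc : P.natDegree = 0
      · omega
      · have hppow : (P ^ p).natDegree = p * P.natDegree := natDegree_pow P p
        have hlt : P.natDegree < (P ^ p).natDegree := by
          rw [hppow]; nlinarith [Nat.pos_of_ne_zero hPc]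
        have hDeq : (P - P ^ p).natDegree = p * P.natDegree := by
          rw [natDegree_sub_eq_right_of_natDegree_lt hlt, hppow]
        rw [← hPe] at hDeq
        have h1 : p * P.natDegree ≤ m - 1 := hDeq ▸ hDdeg
        have h2 : p * P.natDegree < p * j := by
          calc p * P.natDegree ≤ ℓ * q := by omega
            _ < p * j := hlj
        exact lt_of_mul_lt_mul_left h2 (Nat.zero_le p)
    -- coefficient of X^j of P - P^p vanishes
    have hDj : (f.comp (X + C y) - f - C (f.eval y)).coeff j = 0 := by
      rw [hPe, coeff_sub, coeff_eq_zero_of_natDegree_lt hPdeg]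
      have : (P ^ p).coeff j = 0 := by
        rw [← Polynomial.map_frobenius_expand p P, coeff_map, Polynomial.coeff_expand hp.pos,
          if_neg hpj, map_zero]
      rw [this, sub_zero]
    -- g.eval y equals this coefficient
    have hgev : g.eval y = (f.comp (X + C y) - f - C (f.eval y)).coeff j := by
      rw [coeff_sub, coeff_sub, coeff_comp_X_add_C', hm, coeff_C, if_neg (by omega), hgdef]
      simp only [eval_sub, eval_finset_sum, eval_mul, eval_C, eval_pow, eval_X]
      rw [sub_zero]
      congr 1
      exact Finset.sum_congr rfl fun i _ => by ring
    rw [IsRoot, hgev, hDj]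
  -- g has the right leading coefficient
  have hgq : g.coeff q = f.coeff m * (m.choose j : k) := by
    rw [hgdef, coeff_sub, coeff_C, if_neg (by omega), sub_zero, finset_sum_coeff]
    rw [Finset.sum_eq_single_of_mem m (Finset.self_mem_range_succ m)
      (fun i hi hne => by
        have hi' : i < m := by simp at hi; omega
        have : i - j ≠ q := by omega
        rw [coeff_C_mul, coeff_X_pow, if_neg (fun h => this h.symm), mul_zero])]
    rw [coeff_C_mul, coeff_X_pow, if_pos (by omega), mul_one]
  have hchoose : (m.choose j : k) ≠ 0 := by
    rw [Ne, CharP.cast_eq_zero_iff k p]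
    have hsymm : m.choose j = m.choose q := by
      have : j = m - q := hjdef
      rw [this, Nat.choose_symm (by omega)]
    rw [hsymm, hm1, hq]
    exact lucas_aux p hp ℓ s hs hpl
  have hgqne : g.coeff q ≠ 0 := by rw [hgq]; exact mul_ne_zero hfm hchoose
  have hg0 : g ≠ 0 := fun h => hgqne (by rw [h, coeff_zero])
  have hdeg : g.natDegree ≤ q := by
    refine le_trans (natDegree_sub_le _ _) (max_le ?_ (by simp))
    refine Polynomial.natDegree_sum_le_of_forall_le _ _ fun i hi => ?_
    refine le_trans (natDegree_C_mul_le _ _) ?_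
    rw [natDegree_X_pow]
    have : i < m + 1 := by simpa using hi
    omega
  -- conclusion
  have hsub : Sf p f ⊆ (g.roots.toFinset : Set k) := fun y hy => by
    rw [Finset.mem_coe, Multiset.mem_toFinset, mem_roots hg0]
    exact hroot y hy
  refine ⟨Set.Finite.subset g.roots.toFinset.finite_toSet hsub, ?_⟩
  calc (Sf p f).ncard ≤ (g.roots.toFinset : Set k).ncard :=
        Set.ncard_le_ncard hsub g.roots.toFinset.finite_toSet
    _ = g.roots.toFinset.card := Set.ncard_coe_finset _
    _ ≤ Multiset.card g.roots := g.roots.toFinset_card_le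
    _ ≤ g.natDegree := g.card_roots'
    _ ≤ q := hdeg
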